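/- arXiv:1910.04581 — 2 statements merged into one kernel-verified Lean document; each statement's English description precedes it below -/
import Mathlib

section
/- Let G and G + g be λ-strongly convex differentiable functions on ℝ^d with λ > 0, and let f₁ be the minimizer of G and f₂ the minimizer of G + g. Then ‖f₁ - f₂‖ ≤ (1/λ) · sup over f of ‖∇g(f)‖, assuming the supremum M = sup_f ‖∇g(f)‖ is finite. -/
open InnerProductSpace

private lemma min_strong_convex {E : Type*} [NormedAddCommGroup E] [InnerProductSpace ℝ E]
    {F : E → ℝ} {m : ℝ} (hc : ConvexOn ℝ Set.univ (fun x => F x - (m / 2) * ‖x‖ ^ 2))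
    {x : E} (hmin : ∀ y, F x ≤ F y) (y : E) :
    F x + m / 2 * ‖x - y‖ ^ 2 ≤ F y := by
  have huc : StrongConvexOn Set.univ m F := strongConvexOn_iff_convex.mpr hc
  set c : ℝ := m / 2 * ‖x - y‖ ^ 2 with hc'
  have key : ∀ t : ℝ, t ∈ Set.Ioo (0:ℝ) 1 → F x + t * c ≤ F y := by
    intro t ht
    have h1t : (0:ℝ) < 1 - t := by linarith [ht.2]
    have := huc.2 (Set.mem_univ x) (Set.mem_univ y) (le_of_lt ht.1) (le_of_lt h1t)
      (by ring)
    have hxle : F x ≤ F (t • x + (1 - t) • y) := hmin _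
    have h2 := hxle.trans this
    simp only [smul_eq_mul] at h2
    rw [hc']
    nlinarith [h2]
  have htend : Filter.Tendsto (fun t : ℝ => F x + t * c) (nhdsWithin 1 (Set.Ioo (0:ℝ) 1))
      (nhds (F x + 1 * c)) :=
    ((continuous_const.add (continuous_id.mul continuous_const)).tendsto 1).mono_left
      nhdsWithin_le_nhds
  have hne : (nhdsWithin (1:ℝ) (Set.Ioo (0:ℝ) 1)).NeBot :=
    right_nhdsWithin_Ioo_neBot one_pos
  have := le_of_tendsto htend (Filter.eventually_of_mem self_mem_nhdsWithin key)
  linarith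

theorem strongly_convex_argmin_perturbation {d : ℕ}
    (G g : EuclideanSpace ℝ (Fin d) → ℝ)
    (g' : EuclideanSpace ℝ (Fin d) → EuclideanSpace ℝ (Fin d))
    (lam M : ℝ) (hlam : 0 < lam)
    (hGdiff : Differentiable ℝ G) (hgdiff : ∀ x, HasGradientAt g (g' x) x)
    (hGsc : ConvexOn ℝ Set.univ (fun x => G x - (lam / 2) * ‖x‖ ^ 2))
    (hGgsc : ConvexOn ℝ Set.univ (fun x => G x + g x - (lam / 2) * ‖x‖ ^ 2))
    (f₁ f₂ : EuclideanSpace ℝ (Fin d))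
    (hf₁ : ∀ x, G f₁ ≤ G x)
    (hf₂ : ∀ x, G f₂ + g f₂ ≤ G x + g x)
    (hM : ∀ f, ‖g' f‖ ≤ M) :
    ‖f₁ - f₂‖ ≤ M / lam := by
  -- strong convexity growth at the minimizers
  have h1 : G f₁ + lam / 2 * ‖f₁ - f₂‖ ^ 2 ≤ G f₂ := min_strong_convex hGsc hf₁ f₂
  have h2 : (G f₂ + g f₂) + lam / 2 * ‖f₂ - f₁‖ ^ 2 ≤ G f₁ + g f₁ :=
    min_strong_convex hGgsc hf₂ f₁
  rw [norm_sub_rev f₂ f₁] at h2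
  -- g is M-Lipschitz
  have hLip : g f₁ - g f₂ ≤ M * ‖f₁ - f₂‖ := by
    have := (convex_univ (𝕜 := ℝ)
        (E := EuclideanSpace ℝ (Fin d))).norm_image_sub_le_of_norm_hasFDerivWithin_le
      (f := g) (f' := fun x => (InnerProductSpace.toDual ℝ _) (g' x)) (C := M)
      (fun x _ => ((hgdiff x).hasFDerivAt).hasFDerivWithinAt)
      (fun x _ => by
        rw [(InnerProductSpace.toDual ℝ (EuclideanSpace ℝ (Fin d))).norm_map]
        exact hM x)
      (Set.mem_univ f₂) (Set.mem_univ f₁)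
    calc g f₁ - g f₂ ≤ ‖g f₁ - g f₂‖ := le_abs_self _
      _ ≤ M * ‖f₁ - f₂‖ := this
  have hM0 : 0 ≤ M := le_trans (norm_nonneg _) (hM 0)
  rcases eq_or_lt_of_le (norm_nonneg (f₁ - f₂)) with h0 | h0
  · rw [← h0]; positivity
  · rw [le_div_iff₀ hlam]
    have hsq : lam * ‖f₁ - f₂‖ ^ 2 ≤ M * ‖f₁ - f₂‖ := by nlinarith
    nlinarith
end

section
/- Let O_priv(f) = O(f) + εᵀf where O is λ-strongly convex and differentiable, and let f_priv minimize O_priv and f_opt minimize O. Then O(f_priv) - O(f_opt) ≤ ‖ε‖²/λ. -/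
open RealInnerProductSpace

private lemma quad_growth {d : ℕ} (F : EuclideanSpace ℝ (Fin d) → ℝ) (lam : ℝ)
    (h : StrongConvexOn Set.univ lam F) (m : EuclideanSpace ℝ (Fin d))
    (hm : ∀ f, F m ≤ F f) (x : EuclideanSpace ℝ (Fin d)) :
    F m + lam / 2 * ‖x - m‖ ^ 2 ≤ F x := by
  set c := lam / 2 * ‖x - m‖ ^ 2 with hc
  have key : ∀ t : ℝ, t ∈ Set.Ioo (0:ℝ) 1 → (1 - t) * c ≤ F x - F m := by
    intro t ht
    have h2 := h.2 (Set.mem_univ x) (Set.mem_univ m) ht.1.le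
      (show (0:ℝ) ≤ 1 - t by linarith [ht.2]) (show t + (1 - t) = 1 by ring)
    have h3 := hm (t • x + (1 - t) • m)
    have := le_trans h3 h2
    simp only [smul_eq_mul] at this
    have h4 : t * ((1 - t) * c) ≤ t * (F x - F m) := by
      rw [hc]; nlinarith [ht.1, ht.2]
    exact le_of_mul_le_mul_left h4 ht.1
  have htend : Filter.Tendsto (fun t : ℝ => (1 - t) * c) (nhdsWithin 0 (Set.Ioi 0))
      (nhds ((1 - 0) * c)) := by
    exact Filter.Tendsto.mono_left
      (Continuous.tendsto (by continuity) 0) nhdsWithin_le_nhds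
  have hev : ∀ᶠ t in nhdsWithin (0:ℝ) (Set.Ioi 0), (1 - t) * c ≤ F x - F m := by
    filter_upwards [Ioo_mem_nhdsGT_of_mem (by constructor <;> norm_num : (0:ℝ) ∈ Set.Ico (0:ℝ) 1)]
      with t ht using key t ht
  have := le_of_tendsto htend hev
  simp at this
  linarith

theorem objective_perturbation_gap {d : ℕ}
    (O : EuclideanSpace ℝ (Fin d) → ℝ) (lam : ℝ) (hlam : 0 < lam)
    (hOdiff : Differentiable ℝ O)
    (hOsc : ConvexOn ℝ Set.univ (fun x => O x - (lam / 2) * ‖x‖ ^ 2))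
    (ε f_priv f_opt : EuclideanSpace ℝ (Fin d))
    (hpriv : ∀ f, O f_priv + ⟪ε, f_priv⟫ ≤ O f + ⟪ε, f⟫)
    (hopt : ∀ f, O f_opt ≤ O f) :
    O f_priv - O f_opt ≤ ‖ε‖ ^ 2 / lam := by
  have hO : StrongConvexOn Set.univ lam O := strongConvexOn_iff_convex.mpr hOsc
  set Op : EuclideanSpace ℝ (Fin d) → ℝ := fun f => O f + ⟪ε, f⟫ with hOp
  have hlin : ConvexOn ℝ Set.univ (fun f : EuclideanSpace ℝ (Fin d) => ⟪ε, f⟫) :=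
    ⟨convex_univ, fun x _ y _ a b _ _ _ => by
      dsimp only
      rw [inner_add_right, real_inner_smul_right, real_inner_smul_right]
      simp⟩
  have hOpsc : StrongConvexOn Set.univ lam Op := by
    rw [strongConvexOn_iff_convex]
    have heq : (fun x => Op x - lam / 2 * ‖x‖ ^ 2)
        = ((fun x => O x - lam / 2 * ‖x‖ ^ 2) + fun f => ⟪ε, f⟫) := by
      funext x; simp only [Pi.add_apply, hOp]; ring
    rw [heq]
    exact (strongConvexOn_iff_convex.mp hO).add hlin
  have hqg1 := quad_growth Op lam hOpsc f_priv hpriv f_opt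
  have hqg2 := quad_growth O lam hO f_opt hopt f_priv
  have hrev : ‖f_opt - f_priv‖ = ‖f_priv - f_opt‖ := norm_sub_rev _ _
  set r := ‖f_priv - f_opt‖ with hr
  have hr0 : 0 ≤ r := norm_nonneg _
  have hinner : ⟪ε, f_opt⟫ - ⟪ε, f_priv⟫ = ⟪ε, f_opt - f_priv⟫ := by
    rw [inner_sub_right]
  have hcs : ⟪ε, f_opt - f_priv⟫ ≤ ‖ε‖ * r := by
    calc ⟪ε, f_opt - f_priv⟫ ≤ ‖ε‖ * ‖f_opt - f_priv‖ := real_inner_le_norm _ _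
    _ = ‖ε‖ * r := by rw [hrev]
  have hlamr : lam * r ^ 2 ≤ ‖ε‖ * r := by
    simp only [hOp, hrev] at hqg1
    nlinarith
  have hrle : r ≤ ‖ε‖ / lam := by
    rcases eq_or_lt_of_le hr0 with h0 | h0
    · rw [← h0]; positivity
    · rw [le_div_iff₀ hlam]; nlinarith
  have hgap : O f_priv - O f_opt ≤ ‖ε‖ * r := by
    have := hpriv f_opt
    nlinarith [hcs, hinner]
  calc O f_priv - O f_opt ≤ ‖ε‖ * r := hgap
  _ ≤ ‖ε‖ * (‖ε‖ / lam) := by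
      apply mul_le_mul_of_nonneg_left hrle (norm_nonneg _)
  _ = ‖ε‖ ^ 2 / lam := by ring
end
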